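/- Let E be a Banach space, ε > 0, and (x_j) a sequence in B_E with ‖x_j‖ ≥ ε for all j. With T : ℓ∞ → ℓ∞(E), T((a_n))_j = a_{F(j+1)} x_j as above, every nonzero element of the range of T is a sequence in E that does not converge to 0 in norm. -/

import Mathlib

open Filter

/-- The index (0-based) of the smallest prime factor of `m` in the increasing
enumeration of the primes. -/
noncomputable def Findex (m : ℕ) : ℕ := Nat.count Nat.Prime m.minFac

/-- Every nonzero element of the range of the operator
`T((a_n))_j = a_{F(j+1)} x_j` is an `E`-valued sequence that is not norm null.
(0-indexed coordinates: the `j`-th coordinate carries the multiplier `a (Findex (j+2))`.) -/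
theorem jimenez_range_not_norm_null
    {E : Type*} [NormedAddCommGroup E] [NormedSpace ℝ E] [CompleteSpace E]
    (ε : ℝ) (hε : 0 < ε) (x : ℕ → E) (hx1 : ∀ j, ‖x j‖ ≤ 1) (hxε : ∀ j, ε ≤ ‖x j‖)
    (a : ℕ → ℝ) (ha : Bornology.IsBounded (Set.range a)) (ha0 : a ≠ 0) :
    ¬ Tendsto (fun j : ℕ => a (Findex (j + 2)) • x j) atTop (nhds 0) := by
  intro h
  obtain ⟨k, hk⟩ : ∃ k, a k ≠ 0 := by
    by_contra hc
    push_neg at hc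
    exact ha0 (funext fun n => hc n)
  set p := Nat.nth Nat.Prime k with hpdef
  have hp : p.Prime := Nat.prime_nth_prime k
  have hp2 : 2 ≤ p := hp.two_le
  -- the subsequence j n = p^(n+1) - 2 tends to infinity
  have htop : Tendsto (fun n : ℕ => p ^ (n + 1) - 2) atTop atTop := by
    have h1 : Tendsto (fun n : ℕ => p ^ (n + 1)) atTop atTop :=
      (tendsto_pow_atTop_atTop_of_one_lt hp.one_lt).comp (tendsto_add_atTop_nat 1)
    exact (tendsto_sub_atTop_nat 2).comp h1
  have hF : ∀ n : ℕ, Findex ((p ^ (n + 1) - 2) + 2) = k := by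
    intro n
    have hge : 2 ≤ p ^ (n + 1) :=
      le_trans hp2 (Nat.le_self_pow (Nat.succ_ne_zero n) p)
    rw [Nat.sub_add_cancel hge]
    unfold Findex
    rw [hp.pow_minFac (Nat.succ_ne_zero n)]
    exact Nat.count_nth (fun hf => (Nat.infinite_setOf_prime hf).elim)
  have h2 : Tendsto (fun n : ℕ => a (Findex ((p ^ (n + 1) - 2) + 2)) • x (p ^ (n + 1) - 2))
      atTop (nhds 0) := h.comp htop
  have h3 : Tendsto (fun n : ℕ => ‖a (Findex ((p ^ (n + 1) - 2) + 2)) • x (p ^ (n + 1) - 2)‖)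
      atTop (nhds 0) := by simpa using h2.norm
  have hbound : ∀ n : ℕ, |a k| * ε ≤
      ‖a (Findex ((p ^ (n + 1) - 2) + 2)) • x (p ^ (n + 1) - 2)‖ := by
    intro n
    rw [hF n, norm_smul, Real.norm_eq_abs]
    exact mul_le_mul_of_nonneg_left (hxε _) (abs_nonneg _)
  have hpos : 0 < |a k| * ε := mul_pos (abs_pos.mpr hk) hε
  have := (h3.eventually (eventually_lt_nhds hpos)).exists
  obtain ⟨n, hn⟩ := this
  exact absurd (hbound n) (not_le.mpr hn)
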